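/- Let N be a positive integer, α > 0, δ = 1/(2Nα+1), and run N steps of gradient descent on H_δ (with L = 1) from x₀ = 1 with stepsize α. Then H_δ(x_N) - inf H_δ = 1/(2(2Nα+1)). -/
import Mathlib


theorem stmt_9 (N : ℕ) (hN : 0 < N) (α : ℝ) (hα : 0 < α) (δ : ℝ)
    (hδ : δ = 1 / (2 * N * α + 1))
    (H H' : ℝ → ℝ)
    (hH : ∀ y, H y = if |y| ≤ δ then y ^ 2 / 2 else δ * |y| - δ ^ 2 / 2)
    (hH' : ∀ y, H' y = if |y| ≤ δ then y else δ * Real.sign y)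
    (x : ℕ → ℝ) (hx0 : x 0 = 1)
    (hupdate : ∀ k, x (k + 1) = x k - α * H' (x k)) :
    H (x N) - sInf (Set.range H) = 1 / (2 * (2 * N * α + 1)) := by
  have hNα : (0:ℝ) < (N:ℝ) * α := by positivity
  have hden : (0:ℝ) < 2 * N * α + 1 := by nlinarith
  have hδpos : 0 < δ := by rw [hδ]; positivity
  have hone : δ * (2 * N * α + 1) = 1 := by
    rw [hδ]; field_simp
  -- trajectory formula
  have key : ∀ k, k ≤ N → x k = 1 - k * α * δ := by
    intro k
    induction k with
    | zero => intro _; simpa using hx0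
    | succ k ih =>
      intro hk
      have hkN : k ≤ N := Nat.le_of_succ_le hk
      have hxk := ih hkN
      have hkc : (k:ℝ) ≤ (N:ℝ) := by exact_mod_cast hkN
      have hxge : δ ≤ x k := by
        rw [hxk]
        nlinarith [mul_nonneg (mul_nonneg hδpos.le hα.le) (sub_nonneg.mpr hkc),
          mul_pos (mul_pos hα hδpos) (show (0:ℝ) < N by exact_mod_cast hN)]
      have hH'xk : H' (x k) = δ := by
        rw [hH']
        split
        · next h =>
          have : x k ≤ δ := (abs_le.mp h).2
          linarith
        · have : (0:ℝ) < x k := lt_of_lt_of_le hδpos hxge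
          rw [Real.sign_of_pos this, mul_one]
      rw [hupdate, hH'xk, hxk]
      push_cast
      ring
  have hxN := key N le_rfl
  have hxNval : x N = ((N:ℝ) * α + 1) * δ := by
    rw [hxN]; nlinarith
  have hxNgt : δ < x N := by
    rw [hxNval]; nlinarith
  -- H (x N)
  have hHxN : H (x N) = δ * x N - δ ^ 2 / 2 := by
    rw [hH]
    have : ¬ |x N| ≤ δ := by
      rw [abs_of_pos (lt_trans hδpos hxNgt)]
      linarith
    rw [if_neg this, abs_of_pos (lt_trans hδpos hxNgt)]
  -- sInf (range H) = 0
  have hHnonneg : ∀ y, 0 ≤ H y := by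
    intro y
    rw [hH]
    split
    · positivity
    · next h =>
      have : δ ≤ |y| := le_of_not_ge h
      nlinarith
  have hH0 : H 0 = 0 := by
    rw [hH]
    rw [if_pos (by simpa using hδpos.le)]
    norm_num
  have hinf : sInf (Set.range H) = 0 := by
    apply le_antisymm
    · have hbdd : BddBelow (Set.range H) := ⟨0, by rintro _ ⟨y, rfl⟩; exact hHnonneg y⟩
      have hmem : (0:ℝ) ∈ Set.range H := ⟨0, hH0⟩
      exact csInf_le hbdd hmem
    · exact le_csInf ⟨H 0, 0, rfl⟩ (by rintro _ ⟨y, rfl⟩; exact hHnonneg y)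
  rw [hinf, hHxN, hxNval]
  have h2 : (0:ℝ) < 2 * (2 * N * α + 1) := by linarith
  field_simp
  nlinarith [hone]
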